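/- Shamir's single-test invariant: if d_p' = d mod φ(p·r), d_q' = d mod φ(q·r) where p, q are distinct primes each coprime to r, then S'_p = M^{d_p'} mod (p·r) and S'_q = M^{d_q'} mod (q·r) satisfy S'_p ≡ S'_q (mod r) whenever gcd(M, r) = 1. -/

import Mathlib

theorem shamir_invariant (p q r : ℕ) (hp : p.Prime) (hq : q.Prime) (hpq : p ≠ q)
    (hr : 0 < r) (hrp : Nat.Coprime r p) (hrq : Nat.Coprime r q)
    (M : ℤ) (hM : Int.gcd M (r : ℤ) = 1) (d : ℕ)
    (S'p S'q : ℤ)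
    (hS'p : S'p = M ^ (d % Nat.totient (p * r)) % ((p : ℤ) * r))
    (hS'q : S'q = M ^ (d % Nat.totient (q * r)) % ((q : ℤ) * r)) :
    S'p ≡ S'q [ZMOD (r : ℤ)] := by
  haveI : NeZero r := ⟨hr.ne'⟩
  set ep := d % Nat.totient (p * r) with hep
  set eq := d % Nat.totient (q * r) with heq
  have hdvd_p : Nat.totient r ∣ Nat.totient (p * r) := by
    rw [Nat.totient_mul hrp.symm]; exact dvd_mul_left _ _
  have hdvd_q : Nat.totient r ∣ Nat.totient (q * r) := by
    rw [Nat.totient_mul hrq.symm]; exact dvd_mul_left _ _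
  have he : ep ≡ eq [MOD Nat.totient r] :=
    (Nat.ModEq.of_dvd hdvd_p (Nat.mod_modEq d _)).trans
      (Nat.ModEq.of_dvd hdvd_q (Nat.mod_modEq d _)).symm
  have h1 : S'p ≡ M ^ ep [ZMOD (r : ℤ)] := by
    rw [hS'p]
    exact Int.emod_emod_of_dvd _ ⟨p, mul_comm _ _⟩
  have h2 : S'q ≡ M ^ eq [ZMOD (r : ℤ)] := by
    rw [hS'q]
    exact Int.emod_emod_of_dvd _ ⟨q, mul_comm _ _⟩
  refine h1.trans (Int.ModEq.trans ?_ h2.symm)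
  rw [← ZMod.intCast_eq_intCast_iff]
  push_cast
  -- M is a unit in ZMod r
  have hcop : IsCoprime M (r : ℤ) := Int.isCoprime_iff_gcd_eq_one.mpr hM
  obtain ⟨a, b, hab⟩ := hcop
  have hu : IsUnit (M : ZMod r) := by
    refine IsUnit.of_mul_eq_one (a : ZMod r) ?_
    have := congrArg (fun z : ℤ => (z : ZMod r)) hab
    push_cast at this
    simpa [ZMod.natCast_self, mul_comm] using this
  obtain ⟨u, hu⟩ := hu
  rw [← hu]
  have hord : orderOf u ∣ Nat.totient r := by
    rw [← ZMod.card_units_eq_totient]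
    exact orderOf_dvd_card
  have : u ^ ep = u ^ eq := by
    rw [pow_eq_pow_iff_modEq]
    exact he.of_dvd hord
  exact_mod_cast congrArg (Units.val) this
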